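/- (Absolute clustering.) Let C_1,…,C_k be pairwise disjoint nonempty finite sets of points in ℝ^m with centroids μ_1,…,μ_k and cardinalities n_1,…,n_k; set n = Σ_i n_i, M = max_i n_i and m0 = min_i n_i. Suppose each C_i is contained in the closed ball of radius r_i around μ_i and that for all i ≠ l, ‖μ_i − μ_l‖ ≥ r_i + r_l + g for some g > 0 (a gap g between the enclosing balls). If (a) for every i, g ≥ r_i·√(k·(M + n)/m0), and (b) for every pair p ≠ q, g ≥ k·√(n_p + n_q + n)·√((Σ_i n_i·r_i²)/(n_p·n_q)), then the partition {C_1,…,C_k} is a global minimizer of the k-means objective over all partitions of ∪_i C_i into at most k nonempty clusters. -/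

import Mathlib

open Finset

/-- Centroid of a finite set of points of `ℝ^m`. -/
noncomputable def setCentroid {m : ℕ} (C : Finset (EuclideanSpace ℝ (Fin m))) :
    EuclideanSpace ℝ (Fin m) :=
  ((C.card : ℝ)⁻¹) • ∑ p ∈ C, p

/-- The k-means objective of a partition of a finite set of points of `ℝ^m`. -/
noncomputable def kmeansObjective {m : ℕ} [DecidableEq (EuclideanSpace ℝ (Fin m))]
    {U : Finset (EuclideanSpace ℝ (Fin m))} (P : Finpartition U) : ℝ :=
  ∑ C ∈ P.parts, ∑ p ∈ C, ‖p - setCentroid C‖ ^ 2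

section aux
variable {m : ℕ}
local notation "E" => EuclideanSpace ℝ (Fin m)

lemma card_smul_setCentroid (A : Finset E) :
    (A.card : ℝ) • setCentroid A = ∑ p ∈ A, p := by
  rcases A.eq_empty_or_nonempty with h | h
  · simp [h, setCentroid]
  · rw [setCentroid, smul_smul, mul_inv_cancel₀ (by exact_mod_cast h.card_ne_zero), one_smul]

lemma sum_sub_centroid (A : Finset E) :
    ∑ p ∈ A, (p - setCentroid A) = 0 := by
  rw [Finset.sum_sub_distrib, Finset.sum_const, ← card_smul_setCentroid,
    ← Nat.cast_smul_eq_nsmul ℝ, sub_self]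

/-- Parallel axis theorem. -/
lemma sum_normsq_eq (A : Finset E) (z : E) :
    ∑ p ∈ A, ‖p - z‖ ^ 2
      = (∑ p ∈ A, ‖p - setCentroid A‖ ^ 2) + (A.card : ℝ) * ‖setCentroid A - z‖ ^ 2 := by
  have key : ∀ p : E, ‖p - z‖ ^ 2 = ‖p - setCentroid A‖ ^ 2
      + (2 * inner ℝ (p - setCentroid A) (setCentroid A - z) + ‖setCentroid A - z‖ ^ 2) := by
    intro p
    have h := @norm_add_sq_real _ _ _ (p - setCentroid A) (setCentroid A - z)
    rw [sub_add_sub_cancel] at h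
    linarith
  rw [Finset.sum_congr rfl (fun p _ => key p), Finset.sum_add_distrib, Finset.sum_add_distrib,
    ← Finset.mul_sum, ← sum_inner, sum_sub_centroid]
  simp [Finset.sum_const, nsmul_eq_mul]

lemma centroid_dist_le {A : Finset E} (hA : A.Nonempty) {z : E} {r : ℝ}
    (h : ∀ p ∈ A, dist p z ≤ r) : dist (setCentroid A) z ≤ r := by
  have hc : (A.card : ℝ) ≠ 0 := by exact_mod_cast hA.card_ne_zero
  have : setCentroid A - z = ((A.card : ℝ)⁻¹) • ∑ p ∈ A, (p - z) := by
    rw [Finset.sum_sub_distrib, smul_sub, Finset.sum_const, setCentroid]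
    congr 1
    rw [← Nat.cast_smul_eq_nsmul ℝ, smul_smul, inv_mul_cancel₀ hc, one_smul]
  rw [dist_eq_norm, this, norm_smul]
  calc ‖((A.card:ℝ)⁻¹)‖ * ‖∑ p ∈ A, (p - z)‖ ≤ (A.card:ℝ)⁻¹ * ∑ p ∈ A, ‖p - z‖ := by
        rw [Real.norm_eq_abs, abs_of_nonneg (by positivity)]
        exact mul_le_mul_of_nonneg_left (norm_sum_le _ _) (by positivity)
    _ ≤ (A.card:ℝ)⁻¹ * ∑ p ∈ A, r := by
        apply mul_le_mul_of_nonneg_left _ (by positivity)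
        exact Finset.sum_le_sum (fun p hp => by rw [← dist_eq_norm]; exact h p hp)
    _ = r := by
        rw [Finset.sum_const, nsmul_eq_mul, ← mul_assoc, inv_mul_cancel₀ hc, one_mul]

/-- Splitting a sum over a set covered by pairwise disjoint sets. -/
lemma sum_split_of_cover {α : Type} [DecidableEq α] {M : Type} [AddCommMonoid M]
    (A : Finset α) (Q : Finset (Finset α)) (hd : (Q : Set (Finset α)).PairwiseDisjoint id)
    (hcov : ∀ x ∈ A, ∃ P ∈ Q, x ∈ P) (f : α → M) :
    ∑ x ∈ A, f x = ∑ P ∈ Q, ∑ x ∈ A ∩ P, f x := by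
  have hA : A = Q.biUnion (fun P => A ∩ P) := by
    ext x
    simp only [Finset.mem_biUnion, Finset.mem_inter]
    constructor
    · intro hx
      obtain ⟨P, hP, hxP⟩ := hcov x hx
      exact ⟨P, hP, hx, hxP⟩
    · rintro ⟨P, _, hx, _⟩
      exact hx
  have hd' : (Q : Set (Finset α)).PairwiseDisjoint (fun P => A ∩ P) := fun P hP R hR hne =>
    (hd hP hR hne).mono (Finset.inter_subset_right) (Finset.inter_subset_right)
  nth_rewrite 1 [hA]
  rw [Finset.sum_biUnion hd']

/-- Cost decomposition over a disjoint cover. -/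
lemma cost_decomp [DecidableEq E] (A : Finset E) (Q : Finset (Finset E))
    (hd : (Q : Set (Finset E)).PairwiseDisjoint id)
    (hcov : ∀ x ∈ A, ∃ P ∈ Q, x ∈ P) (z : E) :
    ∑ x ∈ A, ‖x - z‖ ^ 2
      = ∑ P ∈ Q, ((∑ x ∈ A ∩ P, ‖x - setCentroid (A ∩ P)‖ ^ 2)
          + ((A ∩ P).card : ℝ) * ‖setCentroid (A ∩ P) - z‖ ^ 2) := by
  rw [sum_split_of_cover A Q hd hcov]
  exact Finset.sum_congr rfl fun P _ => sum_normsq_eq _ z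

end aux

set_option maxHeartbeats 1000000 in
/-- Absolute clustering: if pairwise disjoint nonempty clusters `C_1,…,C_k`, each
enclosed in a ball of radius `r_i` around its centroid, are separated by gaps of
size at least `g` satisfying conditions (a) and (b), then `{C_1,…,C_k}` is a global
minimizer of the k-means objective over all partitions of their union into at most
`k` nonempty clusters. -/
theorem absolute_clustering_global_min {m k : ℕ}
    [DecidableEq (EuclideanSpace ℝ (Fin m))] (hk : 0 < k)
    (C : Fin k → Finset (EuclideanSpace ℝ (Fin m)))
    (hne : ∀ i, (C i).Nonempty)
    (hdisj : ∀ i j, i ≠ j → Disjoint (C i) (C j))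
    (r : Fin k → ℝ) (g : ℝ) (hg : 0 < g)
    (hball : ∀ i, ∀ p ∈ C i, dist p (setCentroid (C i)) ≤ r i)
    (hsep : ∀ i l, i ≠ l → r i + r l + g ≤ dist (setCentroid (C i)) (setCentroid (C l)))
    (n M m0 : ℝ)
    (hn : n = ∑ i, ((C i).card : ℝ))
    (hM : IsGreatest (Set.range fun i => ((C i).card : ℝ)) M)
    (hm0 : IsLeast (Set.range fun i => ((C i).card : ℝ)) m0)
    (ha : ∀ i, r i * Real.sqrt ((k : ℝ) * (M + n) / m0) ≤ g)
    (hb : ∀ p q, p ≠ q →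
      (k : ℝ) * Real.sqrt (((C p).card : ℝ) + ((C q).card : ℝ) + n) *
        Real.sqrt ((∑ i, ((C i).card : ℝ) * r i ^ 2) /
          (((C p).card : ℝ) * ((C q).card : ℝ))) ≤ g)
    (Γ : Finpartition (Finset.univ.biUnion C))
    (hΓ : Γ.parts = Finset.image C Finset.univ) :
    ∀ Γ' : Finpartition (Finset.univ.biUnion C), Γ'.parts.card ≤ k →
      kmeansObjective Γ ≤ kmeansObjective Γ' := by
  classical
  intro Γ' hΓ'card
  have hr : ∀ i, 0 ≤ r i := fun i => by
    obtain ⟨x, hx⟩ := hne i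
    exact le_trans dist_nonneg (hball i x hx)
  have hcard1 : ∀ i, (1:ℝ) ≤ ((C i).card : ℝ) := fun i => by
    exact_mod_cast (hne i).card_pos
  have hSnn : (0:ℝ) ≤ ∑ i, ((C i).card:ℝ) * r i ^ 2 :=
    Finset.sum_nonneg fun i _ => mul_nonneg (Nat.cast_nonneg _) (sq_nonneg _)
  have hni_le_n : ∀ i, ((C i).card:ℝ) ≤ n := fun i => by
    rw [hn]
    exact Finset.single_le_sum (f := fun j => ((C j).card:ℝ))
      (fun j _ => Nat.cast_nonneg _) (Finset.mem_univ i)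
  have hn0 : (0:ℝ) ≤ n := le_trans (le_trans zero_le_one (hcard1 ⟨0, hk⟩)) (hni_le_n ⟨0, hk⟩)
  have hm0le : ∀ i, m0 ≤ ((C i).card:ℝ) := fun i => hm0.2 ⟨i, rfl⟩
  have hMge : ∀ i, ((C i).card:ℝ) ≤ M := fun i => hM.2 ⟨i, rfl⟩
  have hm0_1 : (1:ℝ) ≤ m0 := by
    obtain ⟨i0, hi0⟩ := hm0.1
    rw [← hi0]
    exact hcard1 i0
  have hm0M : m0 ≤ M := hM.2 hm0.1
  have hkm0n : (k:ℝ) * m0 ≤ n := by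
    rw [hn]
    calc (k:ℝ)*m0 = ∑ _i : Fin k, m0 := by
          rw [Finset.sum_const, Finset.card_univ, Fintype.card_fin, nsmul_eq_mul]
      _ ≤ _ := Finset.sum_le_sum fun i _ => hm0le i
  have hCinj : ∀ i j, C i = C j → i = j := fun i j hij => by
    by_contra hne'
    obtain ⟨x, hx⟩ := hne i
    exact (Finset.disjoint_left.mp (hdisj i j hne') hx) (hij ▸ hx)
  have hQΓ : kmeansObjective Γ = ∑ i, ∑ x ∈ C i, ‖x - setCentroid (C i)‖^2 := by
    rw [kmeansObjective, hΓ, Finset.sum_image (fun i _ j _ h => hCinj i j h)]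
  have hQleS : kmeansObjective Γ ≤ ∑ i, ((C i).card:ℝ) * r i ^ 2 := by
    rw [hQΓ]
    apply Finset.sum_le_sum
    intro i _
    calc ∑ x ∈ C i, ‖x - setCentroid (C i)‖^2 ≤ ∑ _x ∈ C i, r i^2 := by
          apply Finset.sum_le_sum
          intro x hx
          have hd := hball i x hx
          rw [dist_eq_norm] at hd
          exact pow_le_pow_left₀ (norm_nonneg _) hd 2
      _ = ((C i).card:ℝ) * r i^2 := by rw [Finset.sum_const, nsmul_eq_mul]
  by_cases hk1 : k = 1
  · -- trivial case k = 1
    subst hk1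
    have hU1 : Finset.univ.biUnion C = C 0 := by
      have : (Finset.univ : Finset (Fin 1)) = {0} := by simp
      rw [this, Finset.singleton_biUnion]
    have hpartsΓ : Γ.parts = {C 0} := by
      rw [hΓ]
      have : (Finset.univ : Finset (Fin 1)) = {0} := by simp
      rw [this, Finset.image_singleton]
    have hne' : (Finset.univ.biUnion C).Nonempty := by rw [hU1]; exact hne 0
    have hcard' : Γ'.parts.card = 1 :=
      le_antisymm hΓ'card (Finset.card_pos.mpr (Γ'.parts_nonempty (by
        rw [Finset.bot_eq_empty]; exact hne'.ne_empty)))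
    obtain ⟨P, hP⟩ := Finset.card_eq_one.mp hcard'
    have hPU : P = Finset.univ.biUnion C := by
      have h := Γ'.sup_parts
      rw [hP] at h
      simpa using h
    rw [kmeansObjective, kmeansObjective, hpartsΓ, hP, hPU, hU1]
  have hk2 : 2 ≤ k := by omega
  have hk2R : (2:ℝ) ≤ (k:ℝ) := by exact_mod_cast hk2
  have hUne : (Finset.univ.biUnion C).Nonempty := by
    obtain ⟨x, hx⟩ := hne ⟨0, hk⟩
    exact ⟨x, Finset.mem_biUnion.mpr ⟨_, Finset.mem_univ _, hx⟩⟩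
  have hPne : Γ'.parts.Nonempty := Γ'.parts_nonempty (by
    rw [Finset.bot_eq_empty]; exact hUne.ne_empty)
  have hPdisj : (Γ'.parts : Set (Finset (EuclideanSpace ℝ (Fin m)))).PairwiseDisjoint id :=
    Γ'.disjoint
  have hcovC : ∀ i, ∀ x ∈ C i, ∃ P ∈ Γ'.parts, x ∈ P := fun i x hx =>
    Γ'.exists_mem (Finset.mem_biUnion.mpr ⟨i, Finset.mem_univ i, hx⟩)
  have hcovP : ∀ P ∈ Γ'.parts, ∀ x ∈ P, ∃ i, x ∈ C i := fun P hP x hx => by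
    have hxU := (Γ'.le hP) hx
    obtain ⟨i, _, hi⟩ := Finset.mem_biUnion.mp hxU
    exact ⟨i, hi⟩
  have hνball : ∀ i (P : Finset (EuclideanSpace ℝ (Fin m))), (C i ∩ P).Nonempty →
      dist (setCentroid (C i ∩ P)) (setCentroid (C i)) ≤ r i :=
    fun i P hne' => centroid_dist_le hne' fun p hp => hball i p (Finset.mem_inter.mp hp).1
  have hWnn : ∀ i (P : Finset (EuclideanSpace ℝ (Fin m))),
      (0:ℝ) ≤ ∑ x ∈ C i ∩ P, ‖x - setCentroid (C i ∩ P)‖^2 := fun i P => by positivity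
  have hsplitC : ∀ (i : Fin k) (f : EuclideanSpace ℝ (Fin m) → ℝ),
      ∑ x ∈ C i, f x = ∑ P ∈ Γ'.parts, ∑ x ∈ C i ∩ P, f x :=
    fun i f => sum_split_of_cover _ _ hPdisj (hcovC i) f
  have hsplitCv : ∀ (i : Fin k) (f : EuclideanSpace ℝ (Fin m) → EuclideanSpace ℝ (Fin m)),
      ∑ x ∈ C i, f x = ∑ P ∈ Γ'.parts, ∑ x ∈ C i ∩ P, f x :=
    fun i f => sum_split_of_cover _ _ hPdisj (hcovC i) f
  have hacard : ∀ i, ∑ P ∈ Γ'.parts, (((C i ∩ P).card:ℝ)) = ((C i).card:ℝ) := fun i => by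
    have h := hsplitC i (fun _ => (1:ℝ))
    simp only [Finset.sum_const, nsmul_eq_mul, mul_one] at h
    exact h.symm
  have hblockvec : ∀ i, ∑ P ∈ Γ'.parts, (((C i ∩ P).card:ℝ)) • setCentroid (C i ∩ P)
      = ((C i).card:ℝ) • setCentroid (C i) := fun i => by
    calc ∑ P ∈ Γ'.parts, (((C i ∩ P).card:ℝ)) • setCentroid (C i ∩ P)
        = ∑ P ∈ Γ'.parts, ∑ x ∈ C i ∩ P, x :=
          Finset.sum_congr rfl fun P _ => card_smul_setCentroid _
      _ = ∑ x ∈ C i, x := (hsplitCv i (fun x => x)).symm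
      _ = ((C i).card:ℝ) • setCentroid (C i) := (card_smul_setCentroid _).symm
  have hQ'eq : kmeansObjective Γ' = ∑ P ∈ Γ'.parts, ∑ i,
      ((∑ x ∈ C i ∩ P, ‖x - setCentroid (C i ∩ P)‖^2)
        + ((C i ∩ P).card:ℝ) * ‖setCentroid (C i ∩ P) - setCentroid P‖^2) := by
    rw [kmeansObjective]
    apply Finset.sum_congr rfl
    intro P hP
    have hcov' : ∀ x ∈ P, ∃ D ∈ Finset.image C Finset.univ, x ∈ D := fun x hx => by
      obtain ⟨i, hxi⟩ := hcovP P hP x hx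
      exact ⟨C i, Finset.mem_image_of_mem C (Finset.mem_univ i), hxi⟩
    have hdisj' : ((Finset.image C Finset.univ :
        Finset (Finset (EuclideanSpace ℝ (Fin m)))) :
        Set (Finset (EuclideanSpace ℝ (Fin m)))).PairwiseDisjoint id := by
      intro D hD D' hD' hne'
      simp only [Finset.coe_image, Set.mem_image] at hD hD'
      obtain ⟨i, _, rfl⟩ := hD
      obtain ⟨j, _, rfl⟩ := hD'
      exact hdisj i j fun h => hne' (by rw [h])
    rw [cost_decomp P (Finset.image C Finset.univ) hdisj' hcov' (setCentroid P),
      Finset.sum_image (fun i _ j _ h => hCinj i j h)]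
    exact Finset.sum_congr rfl fun i _ => by rw [Finset.inter_comm]
  have hQeq : kmeansObjective Γ = ∑ i, ∑ P ∈ Γ'.parts,
      ((∑ x ∈ C i ∩ P, ‖x - setCentroid (C i ∩ P)‖^2)
        + ((C i ∩ P).card:ℝ) * ‖setCentroid (C i ∩ P) - setCentroid (C i)‖^2) := by
    rw [hQΓ]
    exact Finset.sum_congr rfl fun i _ =>
      cost_decomp (C i) Γ'.parts hPdisj (hcovC i) (setCentroid (C i))
  -- generic lower bound on the cost of Γ'
  have hlow : ∀ (s : Finset (Fin k)) (t : Fin k → ℝ), (∀ i ∈ s, 0 ≤ t i) →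
      (∀ i ∈ s, ∀ P ∈ Γ'.parts, (C i ∩ P).Nonempty →
        t i ≤ ‖setCentroid (C i ∩ P) - setCentroid P‖) →
      ∑ i ∈ s, ((C i).card:ℝ) * t i ^ 2 ≤ kmeansObjective Γ' := by
    intro s t ht hb'
    rw [hQ'eq]
    calc ∑ i ∈ s, ((C i).card:ℝ) * t i^2
        = ∑ i ∈ s, ∑ P ∈ Γ'.parts, ((C i ∩ P).card:ℝ)*t i^2 :=
          Finset.sum_congr rfl fun i _ => by rw [← Finset.sum_mul, hacard i]
      _ ≤ ∑ i ∈ s, ∑ P ∈ Γ'.parts,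
            ((C i ∩ P).card:ℝ)*‖setCentroid (C i ∩ P) - setCentroid P‖^2 := by
          apply Finset.sum_le_sum
          intro i hi
          apply Finset.sum_le_sum
          intro P hP
          rcases (C i ∩ P).eq_empty_or_nonempty with he | hne'
          · simp [he]
          · exact mul_le_mul_of_nonneg_left
              (pow_le_pow_left₀ (ht i hi) (hb' i hi P hP hne') 2) (Nat.cast_nonneg _)
      _ = ∑ P ∈ Γ'.parts, ∑ i ∈ s,
            ((C i ∩ P).card:ℝ)*‖setCentroid (C i ∩ P) - setCentroid P‖^2 :=
          Finset.sum_comm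
      _ ≤ _ := by
          apply Finset.sum_le_sum
          intro P _
          calc ∑ i ∈ s, ((C i ∩ P).card:ℝ)*‖setCentroid (C i ∩ P) - setCentroid P‖^2
              ≤ ∑ i ∈ s, ((∑ x ∈ C i ∩ P, ‖x - setCentroid (C i ∩ P)‖^2)
                  + ((C i ∩ P).card:ℝ)*‖setCentroid (C i ∩ P) - setCentroid P‖^2) :=
                Finset.sum_le_sum fun i _ => le_add_of_nonneg_left (hWnn i P)
            _ ≤ _ := Finset.sum_le_sum_of_subset_of_nonneg (Finset.subset_univ s)
                (fun i _ _ => add_nonneg (hWnn i P) (by positivity))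
  -- nearest part of each cluster
  have hex : ∀ i, ∃ P, P ∈ Γ'.parts ∧ ∀ Q ∈ Γ'.parts,
      dist (setCentroid (C i)) (setCentroid P) ≤ dist (setCentroid (C i)) (setCentroid Q) :=
    fun i => by
      obtain ⟨P, hP, hmin⟩ := Γ'.parts.exists_min_image
        (fun P => dist (setCentroid (C i)) (setCentroid P)) hPne
      exact ⟨P, hP, hmin⟩
  choose σ hσmem hσmin using hex
  -- key lower bound for the distance of block centroids to part centroids
  have hkey : ∀ i, ∀ P ∈ Γ'.parts, (C i ∩ P).Nonempty →
      max 0 (dist (setCentroid (C i)) (setCentroid (σ i)) - r i)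
        ≤ ‖setCentroid (C i ∩ P) - setCentroid P‖ := by
    intro i P hP hbne
    apply max_le (norm_nonneg _)
    have h1 := hσmin i P hP
    have h2 : dist (setCentroid (C i)) (setCentroid P)
        ≤ r i + ‖setCentroid (C i ∩ P) - setCentroid P‖ := by
      have hb2 : dist (setCentroid (C i)) (setCentroid (C i ∩ P)) ≤ r i := by
        rw [dist_comm]; exact hνball i P hbne
      calc dist (setCentroid (C i)) (setCentroid P)
          ≤ dist (setCentroid (C i)) (setCentroid (C i ∩ P))
            + dist (setCentroid (C i ∩ P)) (setCentroid P) := dist_triangle _ _ _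
        _ ≤ r i + ‖setCentroid (C i ∩ P) - setCentroid P‖ := by
            rw [← dist_eq_norm]
            exact add_le_add hb2 le_rfl
    linarith
  -- squared form of hypothesis (b)
  have hbsq : ∀ p q, p ≠ q →
      (k:ℝ)^2 * (((C p).card:ℝ) + ((C q).card:ℝ) + n) * (∑ i, ((C i).card:ℝ)*r i^2)
        ≤ g^2 * (((C p).card:ℝ) * ((C q).card:ℝ)) := by
    intro p q hpq
    have hA : (0:ℝ) ≤ ((C p).card:ℝ) + ((C q).card:ℝ) + n := by positivity
    have hB : (0:ℝ) ≤ (∑ i, ((C i).card:ℝ)*r i^2) / (((C p).card:ℝ) * ((C q).card:ℝ)) :=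
      div_nonneg hSnn (mul_nonneg (Nat.cast_nonneg _) (Nat.cast_nonneg _))
    have h0 : (0:ℝ) ≤ (k:ℝ) * Real.sqrt (((C p).card:ℝ) + ((C q).card:ℝ) + n) *
        Real.sqrt ((∑ i, ((C i).card:ℝ)*r i^2) / (((C p).card:ℝ) * ((C q).card:ℝ))) :=
      mul_nonneg (mul_nonneg (Nat.cast_nonneg _) (Real.sqrt_nonneg _)) (Real.sqrt_nonneg _)
    have h1 := pow_le_pow_left₀ h0 (hb p q hpq) 2
    rw [mul_pow, mul_pow, Real.sq_sqrt hA, Real.sq_sqrt hB] at h1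
    have hpos : (0:ℝ) < ((C p).card:ℝ) * ((C q).card:ℝ) := by
      have h1p := hcard1 p; have h1q := hcard1 q; nlinarith
    have h2 : (k:ℝ)^2 * (((C p).card:ℝ) + ((C q).card:ℝ) + n) *
        ((∑ i, ((C i).card:ℝ)*r i^2) / (((C p).card:ℝ) * ((C q).card:ℝ)))
        = ((k:ℝ)^2 * (((C p).card:ℝ) + ((C q).card:ℝ) + n) *
          (∑ i, ((C i).card:ℝ)*r i^2)) / (((C p).card:ℝ) * ((C q).card:ℝ)) := by
      ring
    rw [h2, div_le_iff₀ hpos] at h1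
    linarith
  -- lower bound on distance from cluster centroid to a part centroid
  have hdlow : ∀ i (P : Finset (EuclideanSpace ℝ (Fin m))), (C i ∩ P).Nonempty →
      dist (setCentroid (C i)) (setCentroid P)
        ≤ r i + ‖setCentroid (C i ∩ P) - setCentroid P‖ := by
    intro i P hbne
    have hb2 : dist (setCentroid (C i)) (setCentroid (C i ∩ P)) ≤ r i := by
      rw [dist_comm]; exact hνball i P hbne
    calc dist (setCentroid (C i)) (setCentroid P)
        ≤ dist (setCentroid (C i)) (setCentroid (C i ∩ P))
          + dist (setCentroid (C i ∩ P)) (setCentroid P) := dist_triangle _ _ _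
      _ ≤ r i + ‖setCentroid (C i ∩ P) - setCentroid P‖ := by
          rw [← dist_eq_norm]
          exact add_le_add hb2 le_rfl
  by_cases hinj : Function.Injective σ
  · -- Case 2 : each cluster has its own nearest part
    have himg : Finset.image σ Finset.univ = Γ'.parts := by
      apply Finset.eq_of_subset_of_card_le
      · intro P hP
        obtain ⟨i, _, rfl⟩ := Finset.mem_image.mp hP
        exact hσmem i
      · rw [Finset.card_image_of_injective _ hinj, Finset.card_univ, Fintype.card_fin]
        exact hΓ'card
    have hsurj : ∀ P ∈ Γ'.parts, ∃ q, σ q = P := fun P hP => by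
      rw [← himg] at hP
      obtain ⟨q, _, hq⟩ := Finset.mem_image.mp hP
      exact ⟨q, hq⟩
    by_cases h2a : ∀ q, dist (setCentroid (C q)) (setCentroid (σ q)) ≤ r q + g/k
    · -- Case 2a : all parts close to their cluster centroid
      have hexne : ∀ q : Fin k, ∃ p : Fin k, p ≠ q := by
        intro q
        rcases eq_or_ne q ⟨0, by omega⟩ with h | h
        · refine ⟨⟨1, by omega⟩, ?_⟩
          rw [h]
          simp [Fin.ext_iff]
        · exact ⟨⟨0, by omega⟩, fun hh => h hh.symm⟩
      have hG2 : ∀ i, 2*(r i)^2 ≤ ((1 - 1/(k:ℝ))*g)^2 := by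
        intro i
        obtain ⟨j, hji⟩ := hexne i
        have hF := hbsq j i hji
        have hSi : ((C i).card:ℝ)*r i^2 ≤ ∑ l, ((C l).card:ℝ)*r l^2 :=
          Finset.single_le_sum (f := fun l => ((C l).card:ℝ)*r l^2)
            (fun l _ => mul_nonneg (Nat.cast_nonneg _) (sq_nonneg _)) (Finset.mem_univ i)
        have h1j := hcard1 j
        have h1i := hcard1 i
        have hnj := hni_le_n j
        have hkpos : (0:ℝ) < (k:ℝ) := by linarith
        have hg2 : 2*(k:ℝ)^2*r i^2 ≤ g^2 := by
          have c1 : (k:ℝ)^2*(((C j).card:ℝ) + ((C i).card:ℝ) + n)*(((C i).card:ℝ)*r i^2)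
              ≤ (k:ℝ)^2*(((C j).card:ℝ) + ((C i).card:ℝ) + n)*(∑ l, ((C l).card:ℝ)*r l^2) := by
            apply mul_le_mul_of_nonneg_left hSi
            exact mul_nonneg (sq_nonneg _) (by linarith)
          have c2 : ((k:ℝ)^2*(((C i).card:ℝ)*r i^2))*(2*((C j).card:ℝ))
              ≤ ((k:ℝ)^2*(((C i).card:ℝ)*r i^2))*(((C j).card:ℝ) + ((C i).card:ℝ) + n) := by
            apply mul_le_mul_of_nonneg_left (by linarith)
            exact mul_nonneg (sq_nonneg _) (mul_nonneg (Nat.cast_nonneg _) (sq_nonneg _))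
          have hchain : (2*(k:ℝ)^2*r i^2)*(((C j).card:ℝ)*((C i).card:ℝ))
              ≤ g^2*(((C j).card:ℝ)*((C i).card:ℝ)) := by
            nlinarith [c1, c2, hF]
          exact le_of_mul_le_mul_right hchain (by nlinarith)
        have hkm1 : (1:ℝ) ≤ ((k:ℝ)-1) := by linarith
        have hkne : (k:ℝ) ≠ 0 := ne_of_gt hkpos
        have hiden : ((1 - 1/(k:ℝ))*g)^2 = ((k:ℝ)-1)^2*g^2/(k:ℝ)^2 := by
          field_simp
        rw [hiden, le_div_iff₀ (by positivity : (0:ℝ) < (k:ℝ)^2)]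
        have hsq1 : (1:ℝ) ≤ ((k:ℝ)-1)^2 := by nlinarith
        nlinarith [hg2, sq_nonneg (r i), hsq1, sq_nonneg g]
      -- per-cluster comparison of within-cost
      have hmain : ∀ i,
          ∑ P ∈ Γ'.parts, ((C i ∩ P).card:ℝ) * ‖setCentroid (C i ∩ P) - setCentroid (C i)‖^2
          ≤ ∑ P ∈ Γ'.parts, ((C i ∩ P).card:ℝ) * ‖setCentroid (C i ∩ P) - setCentroid P‖^2 := by
        intro i
        rw [← Finset.sum_erase_add _ _ (hσmem i), ← Finset.sum_erase_add _ _ (hσmem i)]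
        have hmi0 : (0:ℝ) ≤ ∑ P ∈ Γ'.parts.erase (σ i), ((C i ∩ P).card:ℝ) :=
          Finset.sum_nonneg fun P _ => Nat.cast_nonneg _
        have hGg0 : (0:ℝ) ≤ (1 - 1/(k:ℝ))*g := by
          have hkpos : (0:ℝ) < (k:ℝ) := by linarith
          have h1k : 1/(k:ℝ) ≤ 1 := by rw [div_le_one hkpos]; linarith
          exact mul_nonneg (by linarith) hg.le
        have herase_μ :
            ∑ P ∈ Γ'.parts.erase (σ i), ((C i ∩ P).card:ℝ) * ‖setCentroid (C i ∩ P) - setCentroid (C i)‖^2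
            ≤ (∑ P ∈ Γ'.parts.erase (σ i), ((C i ∩ P).card:ℝ)) * r i^2 := by
          rw [Finset.sum_mul]
          apply Finset.sum_le_sum
          intro P hP
          rcases (C i ∩ P).eq_empty_or_nonempty with he | hbne
          · simp [he]
          · apply mul_le_mul_of_nonneg_left _ (Nat.cast_nonneg _)
            have hd := hνball i P hbne
            rw [dist_eq_norm] at hd
            exact pow_le_pow_left₀ (norm_nonneg _) hd 2
        have herase_c :
            (∑ P ∈ Γ'.parts.erase (σ i), ((C i ∩ P).card:ℝ)) * ((1 - 1/(k:ℝ))*g)^2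
            ≤ ∑ P ∈ Γ'.parts.erase (σ i), ((C i ∩ P).card:ℝ) * ‖setCentroid (C i ∩ P) - setCentroid P‖^2 := by
          rw [Finset.sum_mul]
          apply Finset.sum_le_sum
          intro P hP
          rcases (C i ∩ P).eq_empty_or_nonempty with he | hbne
          · simp [he]
          · apply mul_le_mul_of_nonneg_left _ (Nat.cast_nonneg _)
            apply pow_le_pow_left₀ hGg0 _ 2
            obtain ⟨q', hq'⟩ := hsurj P (Finset.mem_of_mem_erase hP)
            have hPne' : P ≠ σ i := Finset.ne_of_mem_erase hP
            have hq'i : q' ≠ i := fun h => hPne' (by rw [← hq', h])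
            have hδq' : dist (setCentroid (C q')) (setCentroid P) ≤ r q' + g/k := by
              rw [← hq']; exact h2a q'
            have hsep' := hsep i q' (Ne.symm hq'i)
            have htri1 : dist (setCentroid (C i)) (setCentroid (C q'))
                ≤ dist (setCentroid (C i)) (setCentroid P)
                  + dist (setCentroid (C q')) (setCentroid P) := dist_triangle_right _ _ _
            have htri2 := hdlow i P hbne
            have hgk : (1 - 1/(k:ℝ))*g = g - g/(k:ℝ) := by ring
            rw [hgk]
            linarith
        have hdiag_μ :
            ((C i ∩ σ i).card:ℝ) * ‖setCentroid (C i ∩ σ i) - setCentroid (C i)‖^2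
            ≤ (∑ P ∈ Γ'.parts.erase (σ i), ((C i ∩ P).card:ℝ)) * r i^2 := by
          rcases (C i ∩ σ i).eq_empty_or_nonempty with he | hbne
          · simp only [he, Finset.card_empty, Nat.cast_zero, zero_mul]
            exact mul_nonneg hmi0 (sq_nonneg _)
          · have hids : ∑ P ∈ Γ'.parts,
                (((C i ∩ P).card:ℝ)) • (setCentroid (C i ∩ P) - setCentroid (C i)) = 0 := by
              have h1 : ∑ P ∈ Γ'.parts,
                  (((C i ∩ P).card:ℝ)) • (setCentroid (C i ∩ P) - setCentroid (C i))
                  = (∑ P ∈ Γ'.parts, (((C i ∩ P).card:ℝ)) • setCentroid (C i ∩ P))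
                    - (∑ P ∈ Γ'.parts, (((C i ∩ P).card:ℝ))) • setCentroid (C i) := by
                simp only [smul_sub]
                rw [Finset.sum_sub_distrib, ← Finset.sum_smul]
              rw [h1, hblockvec i, hacard i, sub_self]
            have hvec : (((C i ∩ σ i).card:ℝ)) • (setCentroid (C i ∩ σ i) - setCentroid (C i))
                = ∑ P ∈ Γ'.parts.erase (σ i),
                    (((C i ∩ P).card:ℝ)) • (setCentroid (C i) - setCentroid (C i ∩ P)) := by
              rw [← Finset.sum_erase_add _ _ (hσmem i)] at hids
              have hd := eq_neg_of_add_eq_zero_right hids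
              rw [hd, ← Finset.sum_neg_distrib]
              apply Finset.sum_congr rfl
              intro P _
              rw [← smul_neg, neg_sub]
            have hnormle : (((C i ∩ σ i).card:ℝ)) * ‖setCentroid (C i ∩ σ i) - setCentroid (C i)‖
                ≤ (∑ P ∈ Γ'.parts.erase (σ i), ((C i ∩ P).card:ℝ)) * r i := by
              calc (((C i ∩ σ i).card:ℝ)) * ‖setCentroid (C i ∩ σ i) - setCentroid (C i)‖
                  = ‖(((C i ∩ σ i).card:ℝ)) • (setCentroid (C i ∩ σ i) - setCentroid (C i))‖ := by
                    rw [norm_smul, Real.norm_eq_abs, abs_of_nonneg (Nat.cast_nonneg _)]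
                _ = ‖∑ P ∈ Γ'.parts.erase (σ i),
                      (((C i ∩ P).card:ℝ)) • (setCentroid (C i) - setCentroid (C i ∩ P))‖ := by
                    rw [hvec]
                _ ≤ ∑ P ∈ Γ'.parts.erase (σ i),
                      ‖(((C i ∩ P).card:ℝ)) • (setCentroid (C i) - setCentroid (C i ∩ P))‖ :=
                    norm_sum_le _ _
                _ ≤ ∑ P ∈ Γ'.parts.erase (σ i), ((C i ∩ P).card:ℝ) * r i := by
                    apply Finset.sum_le_sum
                    intro P _
                    rw [norm_smul, Real.norm_eq_abs, abs_of_nonneg (Nat.cast_nonneg _)]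
                    rcases (C i ∩ P).eq_empty_or_nonempty with he' | hbne'
                    · simp [he']
                    · apply mul_le_mul_of_nonneg_left _ (Nat.cast_nonneg _)
                      rw [← dist_eq_norm, dist_comm]
                      exact hνball i P hbne'
                _ = (∑ P ∈ Γ'.parts.erase (σ i), ((C i ∩ P).card:ℝ)) * r i := by
                    rw [Finset.sum_mul]
            have hν_r : ‖setCentroid (C i ∩ σ i) - setCentroid (C i)‖ ≤ r i := by
              rw [← dist_eq_norm]
              exact hνball i (σ i) hbne
            calc ((C i ∩ σ i).card:ℝ) * ‖setCentroid (C i ∩ σ i) - setCentroid (C i)‖^2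
                = (((C i ∩ σ i).card:ℝ) * ‖setCentroid (C i ∩ σ i) - setCentroid (C i)‖)
                  * ‖setCentroid (C i ∩ σ i) - setCentroid (C i)‖ := by ring
              _ ≤ ((∑ P ∈ Γ'.parts.erase (σ i), ((C i ∩ P).card:ℝ)) * r i) * r i := by
                  apply mul_le_mul hnormle hν_r (norm_nonneg _) (mul_nonneg hmi0 (hr i))
              _ = (∑ P ∈ Γ'.parts.erase (σ i), ((C i ∩ P).card:ℝ)) * r i^2 := by ring
        have hdiag_c : (0:ℝ)
            ≤ ((C i ∩ σ i).card:ℝ)*‖setCentroid (C i ∩ σ i) - setCentroid (σ i)‖^2 := by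
          positivity
        have hfin : (∑ P ∈ Γ'.parts.erase (σ i), ((C i ∩ P).card:ℝ))*(2*r i^2)
            ≤ (∑ P ∈ Γ'.parts.erase (σ i), ((C i ∩ P).card:ℝ))*((1 - 1/(k:ℝ))*g)^2 :=
          mul_le_mul_of_nonneg_left (hG2 i) hmi0
        linarith
      calc kmeansObjective Γ
          = ∑ i, ∑ P ∈ Γ'.parts,
              ((∑ x ∈ C i ∩ P, ‖x - setCentroid (C i ∩ P)‖^2)
                + ((C i ∩ P).card:ℝ) * ‖setCentroid (C i ∩ P) - setCentroid (C i)‖^2) := hQeq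
        _ ≤ ∑ i, ∑ P ∈ Γ'.parts,
              ((∑ x ∈ C i ∩ P, ‖x - setCentroid (C i ∩ P)‖^2)
                + ((C i ∩ P).card:ℝ) * ‖setCentroid (C i ∩ P) - setCentroid P‖^2) := by
            apply Finset.sum_le_sum
            intro i _
            rw [Finset.sum_add_distrib, Finset.sum_add_distrib]
            exact add_le_add le_rfl (hmain i)
        _ = ∑ P ∈ Γ'.parts, ∑ i,
              ((∑ x ∈ C i ∩ P, ‖x - setCentroid (C i ∩ P)‖^2)
                + ((C i ∩ P).card:ℝ) * ‖setCentroid (C i ∩ P) - setCentroid P‖^2) :=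
            Finset.sum_comm
        _ = kmeansObjective Γ' := hQ'eq.symm
    · -- Case 2b : some cluster is far from all parts
      simp only [not_forall, not_le] at h2a
      obtain ⟨q, hq⟩ := h2a
      have hkpos : (0:ℝ) < (k:ℝ) := by linarith
      have hgk : (0:ℝ) < g / k := div_pos hg hkpos
      have hQ'ge : ((C q).card:ℝ) * (g/k)^2 ≤ kmeansObjective Γ' := by
        have hlb := hlow {q} (fun _ => g/k) (fun i _ => hgk.le) ?_
        · rw [Finset.sum_singleton] at hlb
          exact hlb
        · intro i hi P hP hbne
          have hiq : i = q := Finset.mem_singleton.mp hi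
          subst hiq
          refine le_trans ?_ (hkey i P hP hbne)
          exact le_max_of_le_right (by linarith)
      obtain ⟨p, hpq⟩ : ∃ p, p ≠ q := by
        rcases eq_or_ne q ⟨0, by omega⟩ with h | h
        · refine ⟨⟨1, by omega⟩, ?_⟩
          rw [h]
          simp [Fin.ext_iff]
        · exact ⟨⟨0, by omega⟩, fun hh => h hh.symm⟩
      have harith : (∑ i, ((C i).card:ℝ)*r i^2) ≤ ((C q).card:ℝ) * (g/k)^2 := by
        have hF := hbsq p q hpq
        have h1p := hcard1 p
        have h1q := hcard1 q
        have hk2pos : (0:ℝ) < (k:ℝ)^2 := by positivity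
        have hrw : ((C q).card:ℝ) * (g/k)^2 = (((C q).card:ℝ) * g^2)/(k:ℝ)^2 := by
          rw [div_pow]; ring
        rw [hrw, le_div_iff₀ hk2pos]
        have step : (∑ i, ((C i).card:ℝ)*r i^2)*(k:ℝ)^2 * ((C p).card:ℝ)
            ≤ (((C q).card:ℝ)*g^2) * ((C p).card:ℝ) := by
          nlinarith [hF, hSnn, hn0, h1q,
            mul_nonneg (mul_nonneg (sq_nonneg (k:ℝ)) hSnn)
              (by linarith : (0:ℝ) ≤ ((C q).card:ℝ) + n)]
        exact le_of_mul_le_mul_right step (by linarith)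
      exact le_trans hQleS (le_trans harith hQ'ge)
  · -- Case 1 : two clusters share the same nearest part
    rw [Function.not_injective_iff] at hinj
    obtain ⟨p, q, hσeq, hpq⟩ := hinj
    have hgap := hsep p q hpq
    have htri : dist (setCentroid (C p)) (setCentroid (C q)) ≤
        dist (setCentroid (C p)) (setCentroid (σ p))
          + dist (setCentroid (C q)) (setCentroid (σ q)) := by
      calc dist (setCentroid (C p)) (setCentroid (C q))
          ≤ dist (setCentroid (C p)) (setCentroid (σ p))
            + dist (setCentroid (σ p)) (setCentroid (C q)) := dist_triangle _ _ _
        _ = dist (setCentroid (C p)) (setCentroid (σ p))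
            + dist (setCentroid (C q)) (setCentroid (σ q)) := by
            rw [hσeq, dist_comm (setCentroid (σ q)) (setCentroid (C q))]
    set u := max 0 (dist (setCentroid (C p)) (setCentroid (σ p)) - r p) with hu
    set v := max 0 (dist (setCentroid (C q)) (setCentroid (σ q)) - r q) with hv
    have hu0 : 0 ≤ u := le_max_left _ _
    have hv0 : 0 ≤ v := le_max_left _ _
    have huv : g ≤ u + v := by
      have h1 : dist (setCentroid (C p)) (setCentroid (σ p)) - r p ≤ u := le_max_right _ _
      have h2 : dist (setCentroid (C q)) (setCentroid (σ q)) - r q ≤ v := le_max_right _ _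
      linarith
    have hQ'ge : ((C p).card:ℝ)*u^2 + ((C q).card:ℝ)*v^2 ≤ kmeansObjective Γ' := by
      have hlb := hlow {p, q} (fun i => if i = p then u else v) ?_ ?_
      · rw [Finset.sum_pair hpq] at hlb
        simp only [if_pos rfl, if_neg (Ne.symm hpq)] at hlb
        exact hlb
      · intro i _
        split
        · exact hu0
        · exact hv0
      · intro i hi P hP hbne
        rcases Finset.mem_insert.mp hi with h | h
        · subst h
          simp only [if_pos rfl]
          exact hkey i P hP hbne
        · have h' : i = q := Finset.mem_singleton.mp h
          subst h'
          rw [if_neg (Ne.symm hpq)]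
          exact hkey i P hP hbne
    have harith : (∑ i, ((C i).card:ℝ)*r i^2)
        ≤ ((C p).card:ℝ)*u^2 + ((C q).card:ℝ)*v^2 := by
      have hF := hbsq p q hpq
      have h1p := hcard1 p
      have h1q := hcard1 q
      have hguv : g^2 ≤ (u+v)^2 := pow_le_pow_left₀ hg.le huv 2
      have e1 : (((C p).card:ℝ) + ((C q).card:ℝ)) * (∑ i, ((C i).card:ℝ)*r i^2)
          ≤ (k:ℝ)^2*(((C p).card:ℝ) + ((C q).card:ℝ) + n) * (∑ i, ((C i).card:ℝ)*r i^2) := by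
        apply mul_le_mul_of_nonneg_right _ hSnn
        nlinarith [mul_nonneg (by nlinarith [hk2R] : (0:ℝ) ≤ (k:ℝ)^2 - 1)
          (by linarith : (0:ℝ) ≤ ((C p).card:ℝ) + ((C q).card:ℝ) + n)]
      have e2 : g^2*(((C p).card:ℝ)*((C q).card:ℝ))
          ≤ (u+v)^2*(((C p).card:ℝ)*((C q).card:ℝ)) :=
        mul_le_mul_of_nonneg_right hguv (by positivity)
      have e3 : (((C p).card:ℝ)*((C q).card:ℝ))*(u+v)^2
          ≤ (((C p).card:ℝ) + ((C q).card:ℝ))*(((C p).card:ℝ)*u^2+((C q).card:ℝ)*v^2) := by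
        nlinarith [sq_nonneg (((C p).card:ℝ)*u - ((C q).card:ℝ)*v)]
      have e4 : (((C p).card:ℝ) + ((C q).card:ℝ)) * (∑ i, ((C i).card:ℝ)*r i^2)
          ≤ (((C p).card:ℝ) + ((C q).card:ℝ))*(((C p).card:ℝ)*u^2+((C q).card:ℝ)*v^2) := by
        nlinarith [hF, e1, e2, e3]
      exact le_of_mul_le_mul_left e4 (by linarith)
    exact le_trans hQleS (le_trans harith hQ'ge)
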